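/- With h = p^m the largest power of the characteristic p dividing n, the space F_q^n decomposes as an internal direct sum: F_q^n = ker(Δ^h) ⊕ im(Δ^h). -/

import Mathlib

theorem stmt_11 (p n m : ℕ) (hn : 0 < n) (F : Type*) [Field F] [Fintype F]
    [CharP F p] (hdvd : p ^ m ∣ n) (hndvd : ¬ p ^ (m + 1) ∣ n)
    (Δ : Module.End F (ZMod n → F))
    (hΔ : ∀ (x : ZMod n → F) (i : ZMod n), Δ x i = x (i + 1) - x i) :
    IsCompl (LinearMap.ker (Δ ^ (p ^ m))) (LinearMap.range (Δ ^ (p ^ m))) := by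
  haveI : NeZero n := ⟨hn.ne'⟩
  haveI : Fact p.Prime := ⟨CharP.char_is_prime F p⟩
  haveI : Nontrivial (ZMod n → F) := Pi.nontrivial
  haveI : CharP (Module.End F (ZMod n → F)) p :=
    charP_of_injective_algebraMap' F p
  set V := ZMod n → F
  set S : Module.End F V := Δ + 1 with hSdef
  have hS : ∀ (x : V) (i : ZMod n), S x i = x (i + 1) := by
    intro x i
    simp [hSdef, hΔ]
  have hSpow : ∀ (k : ℕ) (x : V) (i : ZMod n), (S ^ k) x i = x (i + k) := by
    intro k
    induction k with
    | zero => simp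
    | succ k ih =>
      intro x i
      rw [pow_succ, Module.End.mul_apply, ih, hS]
      congr 1
      push_cast
      ring
  have hSn : S ^ n = 1 := by
    apply LinearMap.ext
    intro x
    funext i
    rw [Module.End.one_apply, hSpow]
    simp
  have hΔS : Δ = S - 1 := by simp [hSdef]
  have hT : Δ ^ (p ^ m) = S ^ (p ^ m) - 1 := by
    rw [hΔS, sub_pow_char_pow_of_commute _ _ (Commute.one_right S), one_pow]
  set U : Module.End F V := S ^ (p ^ m) with hUdef
  set T : Module.End F V := Δ ^ (p ^ m) with hTdef
  set n' : ℕ := n / p ^ m with hn'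
  have hnn' : p ^ m * n' = n := Nat.mul_div_cancel' hdvd
  have hpn' : ¬ p ∣ n' := by
    intro hp
    apply hndvd
    obtain ⟨c, hc⟩ := hp
    exact ⟨c, by rw [← hnn', hc, pow_succ]; ring⟩
  have hn'F : (n' : F) ≠ 0 := by
    rw [Ne, CharP.cast_eq_zero_iff F p]
    exact hpn'
  have hUn' : U ^ n' = 1 := by
    rw [hUdef, ← pow_mul, hnn', hSn]
  -- key: T (T x) = 0 → T x = 0
  have key : ∀ x : V, T (T x) = 0 → T x = 0 := by
    intro x hx
    set y : V := T x with hy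
    have hTy : T y = 0 := hx
    have hUy : U y = y := by
      have h1 : U y - y = 0 := by
        have : (U - 1) y = 0 := by rw [← hT]; exact hTy
        simpa [LinearMap.sub_apply] using this
      exact sub_eq_zero.mp h1
    have hUky : ∀ k : ℕ, (U ^ k) y = y := by
      intro k
      induction k with
      | zero => simp
      | succ k ih => rw [pow_succ, Module.End.mul_apply, hUy, ih]
    have hgeom : (∑ k ∈ Finset.range n', U ^ k) * (U - 1) = U ^ n' - 1 :=
      geom_sum_mul U n'
    have h0 : (∑ k ∈ Finset.range n', U ^ k) y = 0 := by
      have : (∑ k ∈ Finset.range n', U ^ k) ((U - 1) x) = (U ^ n' - 1) x := by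
        rw [← Module.End.mul_apply, hgeom]
      have hyx : (U - 1) x = y := by rw [← hT, hy]
      rw [hyx, hUn'] at this
      simpa using this
    have hsum : (∑ k ∈ Finset.range n', U ^ k) y = n' • y := by
      rw [LinearMap.sum_apply]
      simp [hUky]
    rw [hsum] at h0
    have : (n' : F) • y = 0 := by
      rw [← Nat.cast_smul_eq_nsmul F] at h0
      exact h0
    rw [hy]
    exact (smul_eq_zero.mp this).resolve_left hn'F
  have hdisj : Disjoint (LinearMap.ker T) (LinearMap.range T) := by
    rw [Submodule.disjoint_def]
    rintro v hv ⟨w, rfl⟩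
    exact key w hv
  haveI : FiniteDimensional F V := by
    infer_instance
  have hrank : Module.finrank F ↥(LinearMap.ker T ⊔ LinearMap.range T)
      = Module.finrank F V := by
    have h1 := Submodule.finrank_sup_add_finrank_inf_eq
      (LinearMap.ker T) (LinearMap.range T)
    rw [hdisj.eq_bot] at h1
    have h2 := LinearMap.finrank_range_add_finrank_ker T
    simp only [finrank_bot, add_zero] at h1
    omega
  have htop : LinearMap.ker T ⊔ LinearMap.range T = ⊤ :=
    Submodule.eq_top_of_finrank_eq hrank
  exact ⟨hdisj, codisjoint_iff.mpr htop⟩
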